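/- Each persistence landscape function Λ^μ_i is 1-Lipschitz: for a finite barcode, |Λ^μ_i(s) − Λ^μ_i(t)| ≤ |s − t| for all s, t ∈ ℝ, where Λ^μ_i(t) is the i-th largest value (with multiplicity) among {Δ([p,q], t) : (p,q) ∈ B}. -/

import Mathlib

/-- The tent function of an interval. -/
noncomputable def tent (pq : ℝ × ℝ) (t : ℝ) : ℝ := max (min (t - pq.1) (pq.2 - t)) 0

/-- The i-th landscape function: the i-th largest element (counted with multiplicity)
of the multiset of tent-function values, with the convention that it is 0 when the
index exceeds the number of bars. -/
noncomputable def landscape (B : Finset (ℝ × ℝ)) (μ : ℝ × ℝ → ℕ) (i : ℕ) (t : ℝ) : ℝ :=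
  let l := Multiset.sort (B.val.bind fun pq => Multiset.replicate (μ pq) (tent pq t)) (· ≤ ·)
  if 1 ≤ i ∧ i ≤ l.length then l.getD (l.length - i) 0 else 0

lemma tent_lipschitz (pq : ℝ × ℝ) (s t : ℝ) : |tent pq s - tent pq t| ≤ |s - t| := by
  unfold tent
  refine le_trans (abs_max_sub_max_le_abs _ _ _) ?_
  refine le_trans (abs_min_sub_min_le_max _ _ _ _) ?_
  have h1 : (s - pq.1) - (t - pq.1) = s - t := by ring
  have h2 : (pq.2 - s) - (pq.2 - t) = t - s := by ring
  rw [h1, h2, abs_sub_comm t s, max_self]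

lemma countP_ge_of_sorted {l : List ℝ} (hl : l.Pairwise (· ≤ ·)) {k : ℕ} (hk : k < l.length) :
    k + 1 ≤ l.countP (fun x => decide (x ≤ l.get ⟨k, hk⟩)) := by
  have hsub : (l.take (k+1)).Sublist l := List.take_sublist _ _
  have hlen : (l.take (k+1)).length = k + 1 := by
    rw [List.length_take]; omega
  have hall : ∀ x ∈ l.take (k+1), (fun x => decide (x ≤ l.get ⟨k, hk⟩)) x = true := by
    intro x hx
    obtain ⟨j, hj, rfl⟩ := List.mem_take_iff_getElem.1 hx
    simp only [decide_eq_true_eq]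
    have hjk : j ≤ k := by omega
    have hjl : j < l.length := by omega
    exact hl.rel_get_of_le (a := ⟨j, hjl⟩) (b := ⟨k, hk⟩) hjk
  calc k + 1 = (l.take (k+1)).countP (fun x => decide (x ≤ l.get ⟨k, hk⟩)) := by
        rw [List.countP_eq_length.2 hall, hlen]
    _ ≤ l.countP _ := hsub.subperm.countP_le _

lemma get_le_of_countP {l : List ℝ} (hl : l.Pairwise (· ≤ ·)) {k : ℕ} (hk : k < l.length) {c : ℝ}
    (h : k + 1 ≤ l.countP (fun x => decide (x ≤ c))) : l.get ⟨k, hk⟩ ≤ c := by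
  by_contra hc
  push_neg at hc
  have hdrop : (l.drop k).countP (fun x => decide (x ≤ c)) = 0 := by
    rw [List.countP_eq_zero]
    intro x hx
    obtain ⟨j, hj, rfl⟩ := List.mem_iff_getElem.1 hx
    rw [List.length_drop] at hj
    have hkj : k + j < l.length := by omega
    rw [List.getElem_drop]
    simp only [decide_eq_true_eq, not_le]
    have hle : l.get ⟨k, hk⟩ ≤ l.get ⟨k + j, hkj⟩ :=
      hl.rel_get_of_le (a := ⟨k, hk⟩) (b := ⟨k + j, hkj⟩) (by simp)
    calc c < l.get ⟨k, hk⟩ := hc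
      _ ≤ _ := hle
  have hsplit : l.countP (fun x => decide (x ≤ c)) =
      (l.take k).countP (fun x => decide (x ≤ c)) +
      (l.drop k).countP (fun x => decide (x ≤ c)) := by
    conv_lhs => rw [← List.take_append_drop k l]
    rw [List.countP_append]
  have htk : (l.take k).countP (fun x => decide (x ≤ c)) ≤ k := by
    calc (l.take k).countP _ ≤ (l.take k).length := List.countP_le_length
      _ ≤ k := by rw [List.length_take]; omega
  omega

lemma sorted_get_le {α : Type*} (M : Multiset α) (f g : α → ℝ) (ε : ℝ)
    (hfg : ∀ a ∈ M, |f a - g a| ≤ ε) (k : ℕ)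
    (hks : k < (Multiset.sort (M.map f) (· ≤ ·)).length)
    (hkt : k < (Multiset.sort (M.map g) (· ≤ ·)).length) :
    (Multiset.sort (M.map f) (· ≤ ·)).get ⟨k, hks⟩ ≤
      (Multiset.sort (M.map g) (· ≤ ·)).get ⟨k, hkt⟩ + ε := by
  set ls := Multiset.sort (M.map f) (· ≤ ·) with hls
  set lt := Multiset.sort (M.map g) (· ≤ ·) with hlt
  set c := lt.get ⟨k, hkt⟩ with hc
  have hsorts : ls.Pairwise (· ≤ ·) := Multiset.pairwise_sort _ _
  have hsortt : lt.Pairwise (· ≤ ·) := Multiset.pairwise_sort _ _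
  have h1 : k + 1 ≤ lt.countP (fun x => decide (x ≤ c)) := countP_ge_of_sorted hsortt hkt
  -- transfer counts
  set L := M.toList with hL
  have hpermt : lt.Perm (L.map g) := by
    rw [← Multiset.coe_eq_coe, Multiset.sort_eq, hL, ← Multiset.map_coe, Multiset.coe_toList]
  have hperms : ls.Perm (L.map f) := by
    rw [← Multiset.coe_eq_coe, Multiset.sort_eq, hL, ← Multiset.map_coe, Multiset.coe_toList]
  have h2 : (L.map g).countP (fun x => decide (x ≤ c)) ≤
      (L.map f).countP (fun x => decide (x ≤ c + ε)) := by
    rw [List.countP_map, List.countP_map]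
    apply List.countP_mono_left
    intro a ha hga
    simp only [Function.comp, decide_eq_true_eq] at *
    have hmem : a ∈ M := by exact Multiset.mem_toList.1 ha
    have := abs_le.1 (hfg a hmem)
    linarith [this.1, this.2]
  have h3 : k + 1 ≤ ls.countP (fun x => decide (x ≤ c + ε)) := by
    rw [hperms.countP_eq]
    rw [hpermt.countP_eq] at h1
    omega
  exact get_le_of_countP hsorts hks h3

/-- Each persistence landscape function is 1-Lipschitz. -/
theorem landscape_lipschitz (B : Finset (ℝ × ℝ)) (μ : ℝ × ℝ → ℕ)
    (hμ : ∀ pq ∈ B, 0 < μ pq) (hB : ∀ pq ∈ B, pq.1 ≤ pq.2)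
    (i : ℕ) (hi : 1 ≤ i) (s t : ℝ) :
    |landscape B μ i s - landscape B μ i t| ≤ |s - t| := by
  set M : Multiset (ℝ × ℝ) := B.val.bind fun pq => Multiset.replicate (μ pq) pq with hM
  have hbind : ∀ u : ℝ, (B.val.bind fun pq => Multiset.replicate (μ pq) (tent pq u)) =
      M.map (fun pq => tent pq u) := by
    intro u
    rw [hM, Multiset.map_bind]
    simp [Multiset.map_replicate]
  have hlip : ∀ a ∈ M, |tent a s - tent a t| ≤ |s - t| := fun a _ => tent_lipschitz a s t
  have hlip' : ∀ a ∈ M, |tent a t - tent a s| ≤ |s - t| := by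
    intro a ha; rw [abs_sub_comm]; exact hlip a ha
  simp only [landscape, hbind]
  set ls := Multiset.sort (M.map (fun pq => tent pq s)) (· ≤ ·) with hls
  set lt := Multiset.sort (M.map (fun pq => tent pq t)) (· ≤ ·) with hlt
  have hlens : ls.length = Multiset.card M := by rw [hls, Multiset.length_sort, Multiset.card_map]
  have hlent : lt.length = Multiset.card M := by rw [hlt, Multiset.length_sort, Multiset.card_map]
  by_cases hin : i ≤ Multiset.card M
  · have hks : Multiset.card M - i < ls.length := by omega
    have hkt : Multiset.card M - i < lt.length := by omega
    rw [if_pos ⟨hi, by omega⟩, if_pos ⟨hi, by omega⟩, hlens, hlent,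
      List.getD_eq_getElem _ _ hks, List.getD_eq_getElem _ _ hkt]
    have h1 := sorted_get_le M (fun pq => tent pq s) (fun pq => tent pq t) (|s - t|)
      hlip (Multiset.card M - i) hks hkt
    have h2 := sorted_get_le M (fun pq => tent pq t) (fun pq => tent pq s) (|s - t|)
      hlip' (Multiset.card M - i) hkt hks
    simp only [List.get_eq_getElem] at h1 h2
    rw [abs_sub_le_iff]
    constructor <;> linarith
  · rw [if_neg (by omega), if_neg (by omega)]
    simp [abs_nonneg]
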